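/- Let I_ξ, I_η be finite index sets with parametric node coordinates ξ_m ∈ ℝ (m ∈ I_ξ) and η_n ∈ ℝ (n ∈ I_η). Let W : ℝ² → ℝ be a positive weighting function, η_Γ ∈ ℝ the interface parametric value, and set w̄(ξ) = W(ξ, η_Γ) and ρ(ξ, η) = W(ξ, η)/w̄(ξ). Fix an integer p ≥ 0. Suppose the 1D convolution patch functions W^ξ_m : ℝ → ℝ (m ∈ I_ξ) satisfy the Kronecker delta property W^ξ_m(ξ_r) = δ_{mr} for all m, r ∈ I_ξ and the weighted reproducing conditions Σ_{m∈I_ξ} W^ξ_m(ξ) · ξ_m^q / w̄(ξ_m) = ξ^q / w̄(ξ) for all ξ ∈ ℝ and q = 0, 1, …, p; and suppose W^η_n : ℝ → ℝ (n ∈ I_η) satisfy W^η_n(η_t) = δ_{nt} for all n, t ∈ I_η and Σ_{n∈I_η} W^η_n(η) · η_n^q = η^q for all η ∈ ℝ and q = 0, 1, …, p. Define W_{(m,n)}(ξ, η) = (ρ(ξ_m, η_n)/ρ(ξ, η)) · W^ξ_m(ξ) · W^η_n(η). Then: (1) Kronecker delta: W_{(m,n)}(ξ_r, η_t) = δ_{mr}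 δ_{nt} for all m, r ∈ I_ξ and n, t ∈ I_η; (2) reproducing conditions: Σ_{(m,n)∈I_ξ×I_η} W_{(m,n)}(ξ, η) · ξ_m^{q₁} η_n^{q₂} / W(ξ_m, η_n) = ξ^{q₁} η^{q₂} / W(ξ, η) for all (ξ, η) ∈ ℝ² and all q₁, q₂ ∈ {0, 1, …, p}. -/

import Mathlib

/-- Theorem 4 of the paper (Appendix E): the 2D convolution patch functions built
by the product rule with the NURBS weighting factor `ρ(ξ, η) = W(ξ, η)/W(ξ, η_Γ)`
inherit the Kronecker delta property and the reproducing conditions for the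
rational monomials `ξ^{q₁} η^{q₂} / W(ξ, η)` up to order `p` from the 1D factors. -/
theorem product_rule_kronecker_and_reproducing
    {Iξ Iη : Type*} [Fintype Iξ] [Fintype Iη] [DecidableEq Iξ] [DecidableEq Iη]
    (ξnod : Iξ → ℝ) (ηnod : Iη → ℝ)
    (W : ℝ → ℝ → ℝ) (hWpos : ∀ ξ η : ℝ, 0 < W ξ η)
    (ηΓ : ℝ) (p : ℕ)
    (ρ : ℝ → ℝ → ℝ) (hρ : ∀ ξ η : ℝ, ρ ξ η = W ξ η / W ξ ηΓ)
    -- 1D convolution patch functions in the ξ-direction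
    (Wξ : Iξ → ℝ → ℝ)
    (hWξδ : ∀ m r : Iξ, Wξ m (ξnod r) = if m = r then 1 else 0)
    (hWξrep : ∀ ξ : ℝ, ∀ q ≤ p,
      ∑ m, Wξ m ξ * (ξnod m ^ q / W (ξnod m) ηΓ) = ξ ^ q / W ξ ηΓ)
    -- 1D convolution patch functions in the η-direction
    (Wη : Iη → ℝ → ℝ)
    (hWηδ : ∀ n t : Iη, Wη n (ηnod t) = if n = t then 1 else 0)
    (hWηrep : ∀ η : ℝ, ∀ q ≤ p, ∑ n, Wη n η * ηnod n ^ q = η ^ q)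
    -- 2D convolution patch functions built by the product rule
    (W2 : Iξ × Iη → ℝ → ℝ → ℝ)
    (hW2 : ∀ (m : Iξ) (n : Iη) (ξ η : ℝ),
      W2 (m, n) ξ η = ρ (ξnod m) (ηnod n) / ρ ξ η * Wξ m ξ * Wη n η) :
    -- (1) Kronecker delta property
    (∀ (m r : Iξ) (n t : Iη),
      W2 (m, n) (ξnod r) (ηnod t) =
        (if m = r then (1 : ℝ) else 0) * (if n = t then 1 else 0)) ∧
    -- (2) reproducing conditions
    (∀ ξ η : ℝ, ∀ q₁ ≤ p, ∀ q₂ ≤ p,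
      ∑ k : Iξ × Iη,
        W2 k ξ η * (ξnod k.1 ^ q₁ * ηnod k.2 ^ q₂ / W (ξnod k.1) (ηnod k.2)) =
          ξ ^ q₁ * η ^ q₂ / W ξ η) := by
  have hne : ∀ ξ η : ℝ, W ξ η ≠ 0 := fun ξ η => (hWpos ξ η).ne'
  constructor
  · intro m r n t
    rw [hW2, hWξδ, hWηδ]
    by_cases hm : m = r <;> by_cases hn : n = t <;>
      simp [hm, hn, hρ, div_self (hne _ _)]
    exact ⟨hne _ _, hne _ _⟩
  · intro ξ η q₁ hq₁ q₂ hq₂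
    rw [Fintype.sum_prod_type]
    have key : ∀ (m : Iξ) (n : Iη),
        W2 (m, n) ξ η * (ξnod m ^ q₁ * ηnod n ^ q₂ / W (ξnod m) (ηnod n))
        = (W ξ ηΓ / W ξ η) * (Wξ m ξ * (ξnod m ^ q₁ / W (ξnod m) ηΓ))
            * (Wη n η * ηnod n ^ q₂) := by
      intro m n
      rw [hW2, hρ, hρ]
      field_simp [hne]
    simp_rw [key, ← Finset.mul_sum, ← Finset.sum_mul, ← Finset.mul_sum,
      hWξrep ξ q₁ hq₁, hWηrep η q₂ hq₂]
    field_simp [hne]
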